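/- Every first countable Hausdorff topological space having the Moving Off Property is locally compact. -/

import Mathlib

open Set Topology

/-- A family of sets indexed by `ι` is *discrete* if every point has a neighborhood
meeting at most one member of the family. -/
def IsDiscreteFamily {ι X : Type*} [TopologicalSpace X] (U : ι → Set X) : Prop :=
  ∀ x : X, ∃ V ∈ nhds x, {i : ι | (U i ∩ V).Nonempty}.Subsingleton

/-- A *moving off collection* for `X`: a family of nonempty compact sets such that every
compact set is disjoint from some member of the family. -/
def IsMovingOff {X : Type*} [TopologicalSpace X] (𝒦 : Set (Set X)) : Prop :=
  (∀ K ∈ 𝒦, K.Nonempty) ∧ (∀ K ∈ 𝒦, IsCompact K) ∧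
    ∀ L : Set X, IsCompact L → ∃ K ∈ 𝒦, Disjoint K L

/-- The *Moving Off Property*: every moving off collection contains an infinite subfamily
of pairwise distinct sets admitting a discrete open expansion. -/
def HasMOP (X : Type*) [TopologicalSpace X] : Prop :=
  ∀ 𝒦 : Set (Set X), IsMovingOff 𝒦 →
    ∃ K : ℕ → Set X, (∀ n, K n ∈ 𝒦) ∧ Function.Injective K ∧
      ∃ U : ℕ → Set X, (∀ n, IsOpen (U n)) ∧ (∀ n, K n ⊆ U n) ∧ IsDiscreteFamily U

/-- Key lemma: an (infinitely indexed) family of points lying in the members of a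
discrete family cannot all lie in one compact set. -/
lemma discrete_family_escape {X : Type*} [TopologicalSpace X] {U : ℕ → Set X}
    (hU : IsDiscreteFamily U) {L : Set X} (hL : IsCompact L)
    {S : Set ℕ} (hS : S.Infinite) {p : ℕ → X}
    (hp : ∀ j ∈ S, p j ∈ U j ∧ p j ∈ L) : False := by
  classical
  let e : ℕ ↪ S := Set.Infinite.natEmbedding _ hS
  have hq : ∀ k : ℕ, p (e k) ∈ L := fun k => (hp (e k) (e k).2).2
  have hmap : Filter.map (fun k => p (e k)) Filter.atTop ≤ Filter.principal L := by
    rw [Filter.le_principal_iff, Filter.mem_map]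
    exact Filter.Eventually.of_forall hq
  obtain ⟨z, _, hz⟩ := hL.exists_clusterPt hmap
  obtain ⟨V, hVz, hsub⟩ := hU z
  have hz' : MapClusterPt z Filter.atTop (fun k => p (e k)) := hz
  have hfreq : ∃ᶠ k in Filter.atTop, p (e k) ∈ V := mapClusterPt_iff_frequently.mp hz' V hVz
  obtain ⟨k₁, hk₁⟩ := hfreq.exists
  obtain ⟨k₂, hk₂, hlt⟩ := (hfreq.and_eventually (Filter.eventually_gt_atTop k₁)).exists
  have h₁ : ((e k₁ : ℕ)) ∈ {i : ℕ | (U i ∩ V).Nonempty} :=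
    ⟨p (e k₁), (hp (e k₁) (e k₁).2).1, hk₁⟩
  have h₂ : ((e k₂ : ℕ)) ∈ {i : ℕ | (U i ∩ V).Nonempty} :=
    ⟨p (e k₂), (hp (e k₂) (e k₂).2).1, hk₂⟩
  have : (e k₁ : ℕ) = (e k₂ : ℕ) := hsub h₁ h₂
  exact absurd (e.injective (Subtype.ext this)) (Nat.ne_of_lt hlt)

/-- First countable Hausdorff spaces with the Moving Off Property are locally compact. -/
theorem locallyCompact_of_firstCountable_mop (X : Type*) [TopologicalSpace X] [T2Space X]
    [FirstCountableTopology X] (hmop : HasMOP X) : LocallyCompactSpace X := by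
  suffices h : WeaklyLocallyCompactSpace X by infer_instance
  constructor
  intro x
  by_contra hx
  push_neg at hx
  -- hx : ∀ s, IsCompact s → s ∉ 𝓝 x
  have hne : ∀ L : Set X, IsCompact L → ∃ y, y ∉ L := by
    intro L hL
    by_contra h
    push_neg at h
    exact hx L hL (Set.eq_univ_of_forall h ▸ Filter.univ_mem)
  -- First application of MOP: to all nonempty compact sets, yielding a discrete sequence
  -- of compact sets escaping every compact set.
  obtain ⟨C, hCmem, -, U0, -, hU0sub, hU0disc⟩ := hmop {K | K.Nonempty ∧ IsCompact K}
    ⟨fun K hK => hK.1, fun K hK => hK.2, fun L hL => by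
      obtain ⟨y, hy⟩ := hne L hL
      exact ⟨{y}, ⟨Set.singleton_nonempty y, isCompact_singleton⟩,
        Set.disjoint_singleton_left.mpr hy⟩⟩
  have hCne : ∀ n, (C n).Nonempty := fun n => (hCmem n).1
  have hCcomp : ∀ n, IsCompact (C n) := fun n => (hCmem n).2
  -- Antitone neighborhood basis at x
  obtain ⟨V, hV⟩ := (nhds x).exists_antitone_basis
  have hVmem : ∀ n, V n ∈ nhds x := fun n => hV.toHasBasis.mem_of_mem trivial
  have hVnotsub : ∀ (n : ℕ) (L : Set X), IsCompact L → ∃ y, y ∈ V n ∧ y ∉ L := by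
    intro n L hL
    by_contra h
    push_neg at h
    exact hx L hL (Filter.mem_of_superset (hVmem n) h)
  -- Second application of MOP
  have hmov : IsMovingOff {K : Set X | K.Nonempty ∧ IsCompact K ∧
      ∃ N, (∀ n ≤ N, (K ∩ V n).Nonempty) ∧ (K ∩ C N).Nonempty} := by
    refine ⟨fun K hK => hK.1, fun K hK => hK.2.1, ?_⟩
    intro L hL
    have hCN : ∃ N, Disjoint (C N) L := by
      by_contra h
      push_neg at h
      choose p hp using fun n => Set.not_disjoint_iff.mp (h n)
      exact discrete_family_escape hU0disc hL Set.infinite_univ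
        (fun j _ => ⟨hU0sub j (hp j).1, (hp j).2⟩)
    obtain ⟨N, hN⟩ := hCN
    choose y hyV hyL using fun n => hVnotsub n L hL
    refine ⟨(y '' Set.Iic N) ∪ C N, ⟨?_, ?_, N, ?_, ?_⟩, ?_⟩
    · exact (hCne N).inr
    · exact (((Set.finite_Iic N).image y).isCompact).union (hCcomp N)
    · intro n hn
      exact ⟨y n, Or.inl ⟨n, Set.mem_Iic.mpr hn, rfl⟩, hyV n⟩
    · obtain ⟨z, hz⟩ := hCne N
      exact ⟨z, Or.inr hz, hz⟩
    · rw [Set.disjoint_left]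
      rintro a (⟨n, -, rfl⟩ | ha)
      · exact hyL n
      · exact Set.disjoint_left.mp hN ha
  obtain ⟨M, hMmem, -, W, -, hWsub, hWdisc⟩ := hmop _ hmov
  choose N hNlev hNcore using fun j => (hMmem j).2.2
  by_cases hb : ∃ N₀, {j | N j = N₀}.Infinite
  · obtain ⟨N₀, hinf⟩ := hb
    choose p hp using fun j => hNcore j
    refine discrete_family_escape hWdisc (hCcomp N₀) hinf (p := p) (fun j hj => ?_)
    have hj' : N j = N₀ := hj
    exact ⟨hWsub j (hp j).1, hj' ▸ (hp j).2⟩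
  · push_neg at hb
    obtain ⟨V', hV'mem, hV'sub⟩ := hWdisc x
    obtain ⟨m, -, hm⟩ := hV.toHasBasis.mem_iff.mp hV'mem
    have hfin : {j : ℕ | N j < m}.Finite := by
      refine Set.Finite.subset ((Set.finite_Iio m).biUnion
        (fun i _ => hb i)) ?_
      intro j hj
      exact Set.mem_biUnion hj rfl
    have hTinf : {j : ℕ | m ≤ N j}.Infinite := by
      have : {j : ℕ | m ≤ N j} = {j : ℕ | N j < m}ᶜ := by
        ext j; simp [not_lt]
      rw [this]
      exact hfin.infinite_compl
    let e : ℕ ↪ {j : ℕ | m ≤ N j} := Set.Infinite.natEmbedding _ hTinf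
    have hmemW : ∀ k : ℕ, ((e k : ℕ)) ∈ {i : ℕ | (W i ∩ V').Nonempty} := by
      intro k
      obtain ⟨z, hzM, hzV⟩ := hNlev (e k) (N (e k)) le_rfl
      exact ⟨z, hWsub _ hzM, hm (hV.antitone (e k).2 hzV)⟩
    have h01 : (e 0 : ℕ) = (e 1 : ℕ) := hV'sub (hmemW 0) (hmemW 1)
    exact absurd (e.injective (Subtype.ext h01)) (by norm_num)
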